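/- The ordering cone 𝒦 = {⟨Ã,B̃⟩ ∣ Ã ⊂ B̃} of the Rådström space of dually K-bounded sets is closed in the locally convex topology generated by the seminorms p_{x*}(⟨Ã,B̃⟩) = |inf x*(Ã) − inf x*(B̃)|, x* ∈ K⁺. Concretely: if for every x* ∈ K⁺ and every ε > 0 there exist dually K-bounded sets C, D with |inf x*(C̃) − inf x*(D̃)| < ε and cl(Ã + C̃) ⊂ cl(B̃ + D̃), then Ã ⊂ B̃. -/

import Mathlib

open Pointwise

private lemma ge_on_tilde
    {X : Type*} [NormedAddCommGroup X] [NormedSpace ℝ X]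
    (K S : Set X) (f : X →L[ℝ] ℝ) (hfK : ∀ k ∈ K, 0 ≤ f k)
    (hbd : BddBelow (f '' S)) :
    ∀ x ∈ closure (convexHull ℝ (S + K)), sInf (f '' S) ≤ f x := by
  set m := sInf (f '' S) with hm
  have hclosed : IsClosed {x : X | m ≤ f x} :=
    isClosed_le continuous_const f.continuous
  have hconv : Convex ℝ {x : X | m ≤ f x} := by
    have : IsLinearMap ℝ (f : X → ℝ) := ⟨map_add f, map_smul f⟩
    exact convex_halfSpace_ge this m
  have hsub : S + K ⊆ {x : X | m ≤ f x} := by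
    rintro _ ⟨s, hs, k, hk, rfl⟩
    have h1 : m ≤ f s := csInf_le hbd ⟨s, hs, rfl⟩
    have h2 := hfK k hk
    simp only [Set.mem_setOf_eq, map_add]
    linarith
  intro x hx
  exact closure_minimal (convexHull_min hsub hconv) hclosed hx

private lemma inf_tilde
    {X : Type*} [NormedAddCommGroup X] [NormedSpace ℝ X]
    (K S : Set X) (hK0 : (0 : X) ∈ K) (f : X →L[ℝ] ℝ)
    (hfK : ∀ k ∈ K, 0 ≤ f k) (hS : S.Nonempty) (hbd : BddBelow (f '' S)) :
    sInf (f '' closure (convexHull ℝ (S + K))) = sInf (f '' S) := by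
  have hmem : S ⊆ closure (convexHull ℝ (S + K)) := fun s hs =>
    subset_closure (subset_convexHull ℝ _ ⟨s, hs, 0, hK0, add_zero s⟩)
  apply le_antisymm
  · refine csInf_le_csInf ?_ (hS.image f) (Set.image_mono (f := f) hmem)
    exact ⟨sInf (f '' S), by
      rintro _ ⟨x, hx, rfl⟩
      exact ge_on_tilde K S f hfK hbd x hx⟩
  · refine le_csInf ((hS.mono hmem).image f) ?_
    rintro _ ⟨x, hx, rfl⟩
    exact ge_on_tilde K S f hfK hbd x hx

/-- Closedness of the ordering cone of the Rådström space of dually K-bounded sets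
in the seminorm topology: if for every `x* ∈ K⁺` and `ε > 0` there are dually
K-bounded `C, D` with `|inf x*(C̃) - inf x*(D̃)| < ε` and `cl(Ã + C̃) ⊆ cl(B̃ + D̃)`,
then `Ã ⊆ B̃`. -/
theorem ordering_cone_closed
    {X : Type*} [NormedAddCommGroup X] [NormedSpace ℝ X]
    (K : Set X) (hKcl : IsClosed K) (hKconv : Convex ℝ K)
    (hK0 : (0 : X) ∈ K)
    (hKcone : ∀ t : ℝ, 0 ≤ t → ∀ y ∈ K, t • y ∈ K)
    (A B : Set X) (hA : A.Nonempty) (hB : B.Nonempty)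
    (hdbA : ∀ f : X →L[ℝ] ℝ, (∀ k ∈ K, 0 ≤ f k) → BddBelow (f '' A))
    (hdbB : ∀ f : X →L[ℝ] ℝ, (∀ k ∈ K, 0 ≤ f k) → BddBelow (f '' B))
    (hcl : ∀ f : X →L[ℝ] ℝ, (∀ k ∈ K, 0 ≤ f k) → ∀ ε : ℝ, 0 < ε →
      ∃ C D : Set X, C.Nonempty ∧ D.Nonempty ∧
        (∀ g : X →L[ℝ] ℝ, (∀ k ∈ K, 0 ≤ g k) → BddBelow (g '' C)) ∧
        (∀ g : X →L[ℝ] ℝ, (∀ k ∈ K, 0 ≤ g k) → BddBelow (g '' D)) ∧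
        |sInf (f '' closure (convexHull ℝ (C + K))) -
          sInf (f '' closure (convexHull ℝ (D + K)))| < ε ∧
        closure (closure (convexHull ℝ (A + K)) + closure (convexHull ℝ (C + K))) ⊆
          closure (closure (convexHull ℝ (B + K)) + closure (convexHull ℝ (D + K)))) :
    closure (convexHull ℝ (A + K)) ⊆ closure (convexHull ℝ (B + K)) := by
  intro x hx
  by_contra hxB
  -- separate x from B̃
  obtain ⟨f, u, hfu, hub⟩ :=
    geometric_hahn_banach_point_closed ((convex_convexHull ℝ _).closure) isClosed_closure hxB
  have hmemB : B ⊆ closure (convexHull ℝ (B + K)) := fun b hb =>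
    subset_closure (subset_convexHull ℝ _ ⟨b, hb, 0, hK0, add_zero b⟩)
  -- f is in the positive polar of K
  have hfK : ∀ k ∈ K, 0 ≤ f k := by
    intro k hk
    by_contra h
    push_neg at h
    obtain ⟨b, hb⟩ := hB
    have hbB : u < f b := hub b (hmemB hb)
    set t : ℝ := (u - f b) / f k with ht
    have htpos : 0 < t := div_pos_of_neg_of_neg (by linarith) h
    have hmem : b + t • k ∈ closure (convexHull ℝ (B + K)) :=
      subset_closure (subset_convexHull ℝ _ ⟨b, hb, t • k, hKcone t htpos.le k hk, rfl⟩)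
    have h1 : u < f (b + t • k) := hub _ hmem
    have h2 : f (b + t • k) = f b + t * f k := by
      simp [map_add, map_smul, smul_eq_mul]
    have h3 : t * f k = u - f b := by
      rw [ht]; exact div_mul_cancel₀ _ (ne_of_lt h)
    linarith
  -- u is a lower bound of f on B
  have huB : u ≤ sInf (f '' B) := by
    refine le_csInf (hB.image f) ?_
    rintro _ ⟨b, hb, rfl⟩
    exact (hub b (hmemB hb)).le
  set ε : ℝ := u - f x with hε
  have hεpos : 0 < ε := by simp [hε]; linarith
  obtain ⟨C, D, hCne, hDne, hCb, hDb, hCD, hsub⟩ := hcl f hfK ε hεpos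
  rw [inf_tilde K C hK0 f hfK hCne (hCb f hfK),
      inf_tilde K D hK0 f hfK hDne (hDb f hfK)] at hCD
  set mB := sInf (f '' B)
  set mC := sInf (f '' C)
  set mD := sInf (f '' D)
  -- lower bound on cl(B̃ + D̃)
  have hlow : ∀ z ∈ closure (closure (convexHull ℝ (B + K)) + closure (convexHull ℝ (D + K))),
      mB + mD ≤ f z := by
    have hcl2 : IsClosed {z : X | mB + mD ≤ f z} := isClosed_le continuous_const f.continuous
    intro z hz
    refine hcl2.closure_subset_iff.mpr ?_ hz
    rintro _ ⟨b, hb, d, hd, rfl⟩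
    have h1 := ge_on_tilde K B f hfK (hdbB f hfK) b hb
    have h2 := ge_on_tilde K D f hfK (hDb f hfK) d hd
    simp only [Set.mem_setOf_eq, map_add]
    linarith
  -- for each c ∈ C, x + c lies in cl(B̃ + D̃)
  have hkey : ∀ c ∈ C, mB + mD ≤ f x + f c := by
    intro c hc
    have hcC : c ∈ closure (convexHull ℝ (C + K)) :=
      subset_closure (subset_convexHull ℝ _ ⟨c, hc, 0, hK0, add_zero c⟩)
    have hxc : x + c ∈ closure (closure (convexHull ℝ (A + K)) + closure (convexHull ℝ (C + K))) :=
      subset_closure ⟨x, hx, c, hcC, rfl⟩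
    have := hlow _ (hsub hxc)
    simpa [map_add] using this
  have hmC : mB + mD - f x ≤ mC := by
    refine le_csInf (hCne.image f) ?_
    rintro _ ⟨c, hc, rfl⟩
    have := hkey c hc
    linarith
  have habs := abs_lt.mp hCD
  linarith [habs.1, habs.2]
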